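/- Let S, A be finite sets and suppose both MDPs share the same transition kernel T(s|a,s') and reward r with |r(s,a)| ≤ r_max, discount 0 ≤ γ < 1, and the same initial state distribution p_0. Let π₁, π₂ be two policies satisfying sup_s D_TV(π₁(·|s), π₂(·|s)) ≤ K·d for constants K, d ≥ 0. Let p_t^i(s,a) denote the probability of being in state s and taking action a at time t when following π_i from p_0, and let η_i = ∑_t γ^t ∑_{s,a} p_t^i(s,a) r(s,a). Then |η₁ - η₂| ≤ 2 r_max ∑_{t=0}^∞ γ^t min(1, (t+1)·K·d) ≤ 2 r_max K d / (1-γ)². -/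

import Mathlib

private lemma occ_props {S A : Type*} [Fintype S] [Fintype A]
    (T : S → A → S → ℝ) (hT0 : ∀ s a s', 0 ≤ T s a s') (hT1 : ∀ a s', ∑ s, T s a s' = 1)
    (p0 : S → ℝ) (hp00 : ∀ s, 0 ≤ p0 s) (hp01 : ∑ s, p0 s = 1)
    (π : A → S → ℝ) (hπ0 : ∀ a s, 0 ≤ π a s) (hπ1 : ∀ s, ∑ a, π a s = 1)
    (p : ℕ → S → ℝ) (hinit : p 0 = p0)
    (hrec : ∀ t s, p (t + 1) s = ∑ s', ∑ a', T s a' s' * π a' s' * p t s') :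
    ∀ t, (∀ s, 0 ≤ p t s) ∧ ∑ s, p t s = 1 := by
  intro t
  induction t with
  | zero => exact ⟨by simp [hinit, hp00], by simp [hinit, hp01]⟩
  | succ t ih =>
    obtain ⟨h0, h1⟩ := ih
    constructor
    · intro s
      rw [hrec]
      exact Finset.sum_nonneg fun s' _ => Finset.sum_nonneg fun a' _ =>
        mul_nonneg (mul_nonneg (hT0 _ _ _) (hπ0 _ _)) (h0 s')
    · calc ∑ s, p (t+1) s = ∑ s', ∑ a', (∑ s, T s a' s') * (π a' s' * p t s') := by
            simp only [hrec]
            rw [Finset.sum_comm]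
            refine Finset.sum_congr rfl fun s' _ => ?_
            rw [Finset.sum_comm]
            refine Finset.sum_congr rfl fun a' _ => ?_
            rw [Finset.sum_mul]
            exact Finset.sum_congr rfl fun s _ => by ring
      _ = 1 := by
            simp only [hT1, one_mul]
            rw [← h1]
            refine Finset.sum_congr rfl fun s' _ => ?_
            rw [← Finset.sum_mul, hπ1, one_mul]

/-- Proposition 1: if two policies are uniformly K·d close in TV distance,
the expected discounted returns differ by at most
2 r_max ∑ γ^t min(1,(t+1)Kd) ≤ 2 r_max K d/(1-γ)². -/
theorem prop1_return_bound
    {S A : Type*} [Fintype S] [Fintype A]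
    (T : S → A → S → ℝ)
    (hT0 : ∀ s a s', 0 ≤ T s a s') (hT1 : ∀ a s', ∑ s, T s a s' = 1)
    (r : S → A → ℝ) (rmax : ℝ) (hr : ∀ s a, |r s a| ≤ rmax)
    (γ : ℝ) (hγ0 : 0 ≤ γ) (hγ1 : γ < 1)
    (p0 : S → ℝ) (hp00 : ∀ s, 0 ≤ p0 s) (hp01 : ∑ s, p0 s = 1)
    (π₁ π₂ : A → S → ℝ)
    (hπ₁0 : ∀ a s, 0 ≤ π₁ a s) (hπ₁1 : ∀ s, ∑ a, π₁ a s = 1)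
    (hπ₂0 : ∀ a s, 0 ≤ π₂ a s) (hπ₂1 : ∀ s, ∑ a, π₂ a s = 1)
    (K d : ℝ) (hK : 0 ≤ K) (hd : 0 ≤ d)
    (hTV : ∀ s, (∑ a, |π₁ a s - π₂ a s|) / 2 ≤ K * d)
    (p₁ p₂ : ℕ → S → ℝ)
    (hp₁init : p₁ 0 = p0) (hp₂init : p₂ 0 = p0)
    (hp₁rec : ∀ t s, p₁ (t + 1) s = ∑ s', ∑ a', T s a' s' * π₁ a' s' * p₁ t s')
    (hp₂rec : ∀ t s, p₂ (t + 1) s = ∑ s', ∑ a', T s a' s' * π₂ a' s' * p₂ t s')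
    (η₁ η₂ : ℝ)
    (hη₁ : η₁ = ∑' t : ℕ, γ ^ t * ∑ s, ∑ a, π₁ a s * p₁ t s * r s a)
    (hη₂ : η₂ = ∑' t : ℕ, γ ^ t * ∑ s, ∑ a, π₂ a s * p₂ t s * r s a) :
    |η₁ - η₂| ≤ 2 * rmax * ∑' t : ℕ, γ ^ t * min 1 (((t : ℝ) + 1) * K * d) ∧
      2 * rmax * (∑' t : ℕ, γ ^ t * min 1 (((t : ℝ) + 1) * K * d)) ≤
        2 * rmax * K * d / (1 - γ) ^ 2 := by
  -- nonemptiness and rmax ≥ 0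
  have hS : Nonempty S := by
    by_contra h
    rw [not_nonempty_iff] at h
    rw [Finset.univ_eq_empty, Finset.sum_empty] at hp01
    exact one_ne_zero hp01.symm
  have hA : Nonempty A := by
    by_contra h
    rw [not_nonempty_iff] at h
    have := hπ₁1 (Classical.arbitrary S)
    rw [Finset.univ_eq_empty, Finset.sum_empty] at this
    exact one_ne_zero this.symm
  have hrmax : 0 ≤ rmax :=
    le_trans (abs_nonneg _) (hr (Classical.arbitrary S) (Classical.arbitrary A))
  have hKd : 0 ≤ K * d := mul_nonneg hK hd
  have h1γ : 0 < 1 - γ := by linarith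
  -- occupancy properties
  have hq₁ := occ_props T hT0 hT1 p0 hp00 hp01 π₁ hπ₁0 hπ₁1 p₁ hp₁init hp₁rec
  have hq₂ := occ_props T hT0 hT1 p0 hp00 hp01 π₂ hπ₂0 hπ₂1 p₂ hp₂init hp₂rec
  -- TV bound, doubled
  have hTV2 : ∀ s, ∑ a, |π₁ a s - π₂ a s| ≤ 2 * (K * d) := by
    intro s
    have := hTV s
    linarith
  set Δ : ℕ → ℝ := fun t => ∑ s, ∑ a, |π₁ a s * p₁ t s - π₂ a s * p₂ t s| with hΔdef
  set δ : ℕ → ℝ := fun t => ∑ s, |p₁ t s - p₂ t s| with hδdef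
  -- Δ t ≤ δ t + 2Kd
  have hΔδ : ∀ t, Δ t ≤ δ t + 2 * (K * d) := by
    intro t
    have step : ∀ s, ∑ a, |π₁ a s * p₁ t s - π₂ a s * p₂ t s| ≤
        |p₁ t s - p₂ t s| + p₂ t s * ∑ a, |π₁ a s - π₂ a s| := by
      intro s
      calc ∑ a, |π₁ a s * p₁ t s - π₂ a s * p₂ t s|
          ≤ ∑ a, (π₁ a s * |p₁ t s - p₂ t s| + |π₁ a s - π₂ a s| * p₂ t s) := by
            refine Finset.sum_le_sum fun a _ => ?_
            have : π₁ a s * p₁ t s - π₂ a s * p₂ t s =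
                π₁ a s * (p₁ t s - p₂ t s) + (π₁ a s - π₂ a s) * p₂ t s := by ring
            rw [this]
            refine le_trans (abs_add_le _ _) ?_
            rw [abs_mul, abs_mul, abs_of_nonneg (hπ₁0 a s), abs_of_nonneg ((hq₂ t).1 s)]
        _ = |p₁ t s - p₂ t s| + p₂ t s * ∑ a, |π₁ a s - π₂ a s| := by
            rw [Finset.sum_add_distrib, ← Finset.sum_mul, hπ₁1, one_mul, ← Finset.sum_mul]
            ring
    calc Δ t ≤ ∑ s, (|p₁ t s - p₂ t s| + p₂ t s * ∑ a, |π₁ a s - π₂ a s|) :=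
          Finset.sum_le_sum fun s _ => step s
      _ ≤ ∑ s, (|p₁ t s - p₂ t s| + p₂ t s * (2 * (K * d))) := by
          refine Finset.sum_le_sum fun s _ => ?_
          have := mul_le_mul_of_nonneg_left (hTV2 s) ((hq₂ t).1 s)
          linarith
      _ = δ t + (∑ s, p₂ t s) * (2 * (K * d)) := by
          rw [Finset.sum_add_distrib, Finset.sum_mul]
      _ = δ t + 2 * (K * d) := by rw [(hq₂ t).2, one_mul]
  -- δ (t+1) ≤ Δ t
  have hδΔ : ∀ t, δ (t + 1) ≤ Δ t := by
    intro t
    calc δ (t+1) = ∑ s, |∑ s', ∑ a', T s a' s' *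
          (π₁ a' s' * p₁ t s' - π₂ a' s' * p₂ t s')| := by
          refine Finset.sum_congr rfl fun s _ => ?_
          rw [hp₁rec, hp₂rec, ← Finset.sum_sub_distrib]
          congr 1
          refine Finset.sum_congr rfl fun s' _ => ?_
          rw [← Finset.sum_sub_distrib]
          exact Finset.sum_congr rfl fun a' _ => by ring
      _ ≤ ∑ s, ∑ s', ∑ a', T s a' s' * |π₁ a' s' * p₁ t s' - π₂ a' s' * p₂ t s'| := by
          refine Finset.sum_le_sum fun s _ => ?_
          refine le_trans (Finset.abs_sum_le_sum_abs _ _) (Finset.sum_le_sum fun s' _ => ?_)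
          refine le_trans (Finset.abs_sum_le_sum_abs _ _) (Finset.sum_le_sum fun a' _ => ?_)
          rw [abs_mul, abs_of_nonneg (hT0 s a' s')]
      _ = ∑ s', ∑ a', (∑ s, T s a' s') * |π₁ a' s' * p₁ t s' - π₂ a' s' * p₂ t s'| := by
          rw [Finset.sum_comm]
          refine Finset.sum_congr rfl fun s' _ => ?_
          rw [Finset.sum_comm]
          refine Finset.sum_congr rfl fun a' _ => ?_
          rw [Finset.sum_mul]
      _ = Δ t := by
          refine Finset.sum_congr rfl fun s' _ => Finset.sum_congr rfl fun a' _ => ?_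
          rw [hT1, one_mul]
  have hδ0 : δ 0 = 0 := by
    simp [hδdef, hp₁init, hp₂init]
  -- δ t ≤ 2 t K d
  have hδbound : ∀ t, δ t ≤ 2 * t * (K * d) := by
    intro t
    induction t with
    | zero => simp [hδ0]
    | succ t ih =>
      have := le_trans (hδΔ t) (hΔδ t)
      push_cast
      push_cast at ih
      linarith
  -- Δ t ≤ 2 (trivially)
  have hΔ2 : ∀ t, Δ t ≤ 2 := by
    intro t
    have l1 : ∑ s, ∑ a, π₁ a s * p₁ t s = 1 := by
      rw [← (hq₁ t).2]
      refine Finset.sum_congr rfl fun s _ => ?_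
      rw [← Finset.sum_mul, hπ₁1, one_mul]
    have l2 : ∑ s, ∑ a, π₂ a s * p₂ t s = 1 := by
      rw [← (hq₂ t).2]
      refine Finset.sum_congr rfl fun s _ => ?_
      rw [← Finset.sum_mul, hπ₂1, one_mul]
    calc Δ t ≤ ∑ s, ∑ a, (π₁ a s * p₁ t s + π₂ a s * p₂ t s) := by
          refine Finset.sum_le_sum fun s _ => Finset.sum_le_sum fun a _ => ?_
          refine le_trans (abs_sub _ _) ?_
          rw [abs_of_nonneg (mul_nonneg (hπ₁0 a s) ((hq₁ t).1 s)),
            abs_of_nonneg (mul_nonneg (hπ₂0 a s) ((hq₂ t).1 s))]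
      _ = 2 := by
          simp only [Finset.sum_add_distrib]
          rw [l1, l2]; norm_num
  -- Δ t ≤ 2 * min 1 ((t+1) K d)
  have hΔmin : ∀ t : ℕ, Δ t ≤ 2 * min 1 (((t : ℝ) + 1) * K * d) := by
    intro t
    rcases le_total 1 (((t : ℝ) + 1) * K * d) with h | h
    · rw [min_eq_left h]
      simpa using hΔ2 t
    · rw [min_eq_right h]
      calc Δ t ≤ δ t + 2 * (K * d) := hΔδ t
        _ ≤ 2 * t * (K * d) + 2 * (K * d) := by linarith [hδbound t]
        _ = 2 * (((t : ℝ) + 1) * K * d) := by ring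
  -- per-step reward differences
  set R₁ : ℕ → ℝ := fun t => ∑ s, ∑ a, π₁ a s * p₁ t s * r s a with hR₁
  set R₂ : ℕ → ℝ := fun t => ∑ s, ∑ a, π₂ a s * p₂ t s * r s a with hR₂
  have hRdiff : ∀ t : ℕ, |R₁ t - R₂ t| ≤ 2 * rmax * min 1 (((t : ℝ) + 1) * K * d) := by
    intro t
    have : R₁ t - R₂ t = ∑ s, ∑ a, (π₁ a s * p₁ t s - π₂ a s * p₂ t s) * r s a := by
      simp only [hR₁, hR₂, ← Finset.sum_sub_distrib]
      refine Finset.sum_congr rfl fun s _ => Finset.sum_congr rfl fun a _ => by ring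
    rw [this]
    calc |∑ s, ∑ a, (π₁ a s * p₁ t s - π₂ a s * p₂ t s) * r s a|
        ≤ ∑ s, ∑ a, |π₁ a s * p₁ t s - π₂ a s * p₂ t s| * rmax := by
          refine le_trans (Finset.abs_sum_le_sum_abs _ _) (Finset.sum_le_sum fun s _ => ?_)
          refine le_trans (Finset.abs_sum_le_sum_abs _ _) (Finset.sum_le_sum fun a _ => ?_)
          rw [abs_mul]
          exact mul_le_mul_of_nonneg_left (hr s a) (abs_nonneg _)
      _ = Δ t * rmax := by rw [hΔdef]; simp [Finset.sum_mul]
      _ ≤ (2 * min 1 (((t : ℝ) + 1) * K * d)) * rmax :=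
          mul_le_mul_of_nonneg_right (hΔmin t) hrmax
      _ = 2 * rmax * min 1 (((t : ℝ) + 1) * K * d) := by ring
  -- |R_i| ≤ rmax
  have hRabs : ∀ (π : A → S → ℝ) (p : ℕ → S → ℝ),
      (∀ a s, 0 ≤ π a s) → (∀ s, ∑ a, π a s = 1) →
      (∀ t, (∀ s, 0 ≤ p t s) ∧ ∑ s, p t s = 1) →
      ∀ t : ℕ, |∑ s, ∑ a, π a s * p t s * r s a| ≤ rmax := by
    intro π p hπ0 hπ1 hq t
    calc |∑ s, ∑ a, π a s * p t s * r s a|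
        ≤ ∑ s, ∑ a, π a s * p t s * rmax := by
          refine le_trans (Finset.abs_sum_le_sum_abs _ _) (Finset.sum_le_sum fun s _ => ?_)
          refine le_trans (Finset.abs_sum_le_sum_abs _ _) (Finset.sum_le_sum fun a _ => ?_)
          rw [abs_mul, abs_of_nonneg (mul_nonneg (hπ0 a s) ((hq t).1 s))]
          exact mul_le_mul_of_nonneg_left (hr s a) (mul_nonneg (hπ0 a s) ((hq t).1 s))
      _ = rmax := by
          have : ∑ s, ∑ a, π a s * p t s * rmax = (∑ s, ∑ a, π a s * p t s) * rmax := by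
            simp [Finset.sum_mul]
          rw [this]
          have : ∑ s, ∑ a, π a s * p t s = 1 := by
            rw [← (hq t).2]
            refine Finset.sum_congr rfl fun s _ => ?_
            rw [← Finset.sum_mul, hπ1, one_mul]
          rw [this, one_mul]
  have hgeo : Summable fun t : ℕ => γ ^ t := summable_geometric_of_lt_one hγ0 hγ1
  have hsum₁ : Summable fun t : ℕ => γ ^ t * R₁ t := by
    refine Summable.of_norm_bounded (hgeo.mul_right rmax) fun t => ?_
    rw [Real.norm_eq_abs, abs_mul, abs_of_nonneg (pow_nonneg hγ0 t)]
    exact mul_le_mul_of_nonneg_left (hRabs π₁ p₁ hπ₁0 hπ₁1 hq₁ t) (pow_nonneg hγ0 t)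
  have hsum₂ : Summable fun t : ℕ => γ ^ t * R₂ t := by
    refine Summable.of_norm_bounded (hgeo.mul_right rmax) fun t => ?_
    rw [Real.norm_eq_abs, abs_mul, abs_of_nonneg (pow_nonneg hγ0 t)]
    exact mul_le_mul_of_nonneg_left (hRabs π₂ p₂ hπ₂0 hπ₂1 hq₂ t) (pow_nonneg hγ0 t)
  have hmin0 : ∀ t : ℕ, 0 ≤ min 1 (((t : ℝ) + 1) * K * d) := by
    intro t
    refine le_min zero_le_one ?_
    have : (0:ℝ) ≤ (t : ℝ) + 1 := by positivity
    calc (0:ℝ) ≤ ((t:ℝ)+1) * (K * d) := mul_nonneg this hKd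
      _ = ((t:ℝ)+1) * K * d := by ring
  have hmin1 : ∀ t : ℕ, min 1 (((t : ℝ) + 1) * K * d) ≤ 1 := fun t => min_le_left _ _
  have hsummin : Summable fun t : ℕ => γ ^ t * min 1 (((t : ℝ) + 1) * K * d) := by
    refine Summable.of_norm_bounded hgeo fun t => ?_
    rw [Real.norm_eq_abs, abs_mul, abs_of_nonneg (pow_nonneg hγ0 t),
      abs_of_nonneg (hmin0 t)]
    calc γ ^ t * min 1 (((t : ℝ) + 1) * K * d) ≤ γ ^ t * 1 :=
        mul_le_mul_of_nonneg_left (hmin1 t) (pow_nonneg hγ0 t)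
      _ = γ ^ t := mul_one _
  have hsumbound : Summable fun t : ℕ => 2 * rmax * (γ ^ t * min 1 (((t : ℝ) + 1) * K * d)) :=
    hsummin.mul_left _
  constructor
  · -- first inequality
    have e1 : η₁ = ∑' t : ℕ, γ ^ t * R₁ t := hη₁
    have e2 : η₂ = ∑' t : ℕ, γ ^ t * R₂ t := hη₂
    rw [e1, e2, ← Summable.tsum_sub hsum₁ hsum₂]
    have key : |∑' t : ℕ, (γ ^ t * R₁ t - γ ^ t * R₂ t)| ≤
        ∑' t : ℕ, 2 * rmax * (γ ^ t * min 1 (((t : ℝ) + 1) * K * d)) := by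
      refine le_trans (norm_tsum_le_tsum_norm ((hsum₁.sub hsum₂).norm)) ?_
      refine Summable.tsum_le_tsum (fun t => ?_) (hsum₁.sub hsum₂).norm hsumbound
      rw [Real.norm_eq_abs, ← mul_sub, abs_mul, abs_of_nonneg (pow_nonneg hγ0 t)]
      calc γ ^ t * |R₁ t - R₂ t| ≤ γ ^ t * (2 * rmax * min 1 (((t : ℝ) + 1) * K * d)) :=
          mul_le_mul_of_nonneg_left (hRdiff t) (pow_nonneg hγ0 t)
        _ = 2 * rmax * (γ ^ t * min 1 (((t : ℝ) + 1) * K * d)) := by ring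
    refine le_trans key ?_
    rw [tsum_mul_left]
  · -- second inequality
    have htsum_le : (∑' t : ℕ, γ ^ t * min 1 (((t : ℝ) + 1) * K * d)) ≤
        K * d / (1 - γ) ^ 2 := by
      have hnorm : ‖γ‖ < 1 := by rw [Real.norm_eq_abs, abs_of_nonneg hγ0]; exact hγ1
      have hsumn : Summable fun t : ℕ => (t : ℝ) * γ ^ t := by
        have := summable_pow_mul_geometric_of_norm_lt_one 1 hnorm
        simpa using this
      have hsumn1 : Summable fun t : ℕ => ((t : ℝ) + 1) * γ ^ t := by
        have := hsumn.add hgeo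
        refine this.congr fun t => by ring
      have hbig : Summable fun t : ℕ => γ ^ t * (((t : ℝ) + 1) * K * d) := by
        refine (hsumn1.mul_right (K * d)).congr fun t => by ring
      have step1 : (∑' t : ℕ, γ ^ t * min 1 (((t : ℝ) + 1) * K * d)) ≤
          ∑' t : ℕ, γ ^ t * (((t : ℝ) + 1) * K * d) := by
        refine Summable.tsum_le_tsum (fun t => ?_) hsummin hbig
        exact mul_le_mul_of_nonneg_left (min_le_right _ _) (pow_nonneg hγ0 t)
      refine le_trans step1 ?_
      have heq : (∑' t : ℕ, γ ^ t * (((t : ℝ) + 1) * K * d)) =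
          (∑' t : ℕ, ((t : ℝ) + 1) * γ ^ t) * (K * d) := by
        rw [← tsum_mul_right]
        exact tsum_congr fun t => by ring
      rw [heq]
      have hval : (∑' t : ℕ, ((t : ℝ) + 1) * γ ^ t) = 1 / (1 - γ) ^ 2 := by
        have h1 : (∑' t : ℕ, ((t : ℝ) + 1) * γ ^ t) =
            (∑' t : ℕ, (t : ℝ) * γ ^ t) + ∑' t : ℕ, γ ^ t := by
          rw [← Summable.tsum_add hsumn hgeo]
          exact tsum_congr fun t => by ring
        rw [h1, tsum_coe_mul_geometric_of_norm_lt_one hnorm, tsum_geometric_of_lt_one hγ0 hγ1]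
        field_simp
        ring
      rw [hval]
      have : 1 / (1 - γ) ^ 2 * (K * d) = K * d / (1 - γ) ^ 2 := by ring
      rw [this]
    calc 2 * rmax * (∑' t : ℕ, γ ^ t * min 1 (((t : ℝ) + 1) * K * d))
        ≤ 2 * rmax * (K * d / (1 - γ) ^ 2) :=
          mul_le_mul_of_nonneg_left htsum_le (by linarith)
      _ = 2 * rmax * K * d / (1 - γ) ^ 2 := by ring
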